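/- Let f be entire and non-constant, and suppose φ(z) = cz + b with c ≠ 1 satisfies f(φ(z)) = f(z) for all z. Let z₀ = b/(1−c) and let n ≥ 2 be the order of vanishing of f − f(z₀) at z₀ (equivalently, the smallest n with f^{(n)}(z₀) ≠ 0). Then c^n = 1, i.e., c = e^{2πik/n} for some k ∈ {0, …, n−1}. -/

import Mathlib

/-- If `φ z = c z + b`, `c ≠ 1`, is automorphic for `f`, and `n` is the order of
vanishing of `f - f z₀` at the fixed point `z₀ = b/(1-c)`, then `c^n = 1`. -/
theorem stmt5 (f : ℂ → ℂ) (hf : Differentiable ℂ f)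
    (hnc : ¬ ∃ C : ℂ, ∀ w, f w = C)
    (c b : ℂ) (hc : c ≠ 1)
    (haut : ∀ z : ℂ, f (c * z + b) = f z)
    (n : ℕ) (hn : 2 ≤ n)
    (hvan : ∀ k, 1 ≤ k → k < n → iteratedDeriv k f (b / (1 - c)) = 0)
    (hnz : iteratedDeriv n f (b / (1 - c)) ≠ 0) :
    c ^ n = 1 := by
  set z₀ := b / (1 - c) with hz₀
  have hc1 : (1 : ℂ) - c ≠ 0 := sub_ne_zero.mpr (Ne.symm hc)
  have hfix : c * z₀ + b = z₀ := by
    rw [hz₀]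
    field_simp
    ring
  have hg : ContDiff ℂ n (fun w => f (w + b)) := by
    have : Differentiable ℂ (fun w => f (w + b)) :=
      hf.comp (differentiable_id.add_const b)
    exact this.contDiff.of_le le_top
  have key : iteratedDeriv n (fun z => f (c * z + b)) z₀
      = c ^ n * iteratedDeriv n f (c * z₀ + b) := by
    have h1 : (fun z => f (c * z + b)) = fun z => (fun w => f (w + b)) (c * z) := by
      funext z; rfl
    rw [h1, iteratedDeriv_comp_const_mul hg c, iteratedDeriv_comp_add_const]
  have heq : (fun z => f (c * z + b)) = f := funext haut
  rw [heq, hfix] at key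
  exact mul_right_cancel₀ hnz (by rw [one_mul]; exact key.symm)
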